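/- arXiv:1604.07732 — 3 statements merged into one kernel-verified Lean document; each statement's English description precedes it below -/
import Mathlib

section
/- Let H, H_n be Hilbert subspaces of a Hilbert space H_0 with orthogonal projections P, P_n satisfying P_n → P strongly. Let A ∈ L(H), A_n ∈ L(H_n) with A_n P_n → A P strongly and A_n* P_n → A* P strongly. Then the sequence (A_n) is discretely compact if and only if (A_n* A_n) is discretely compact, if and only if (A_n*) is discretely compact. -/
open Filter Topology

/-- Stummel's notion of a **discretely compact sequence** of bounded operators
`A_n ∈ L(H_n)`, where `H, H_n` are closed subspaces of a Hilbert space `H₀`. -/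
def DiscretelyCompact {H₀ : Type*} [NormedAddCommGroup H₀] [InnerProductSpace ℂ H₀]
    (H : Submodule ℂ H₀) (Hn : ℕ → Submodule ℂ H₀)
    (A : ∀ n, Hn n →L[ℂ] Hn n) : Prop :=
  ∀ φ : ℕ → ℕ, StrictMono φ →
    ∀ x : ∀ k, Hn (φ k), (∃ M : ℝ, ∀ k, ‖x k‖ ≤ M) →
      ∃ ψ : ℕ → ℕ, StrictMono ψ ∧ ∃ y ∈ H,
        Tendsto (fun k => ((A (φ (ψ k)) (x (ψ k)) : H₀))) atTop (𝓝 y)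

section Aux

variable {H₀ : Type*} [NormedAddCommGroup H₀] [InnerProductSpace ℂ H₀]

local notation "⟪" x ", " y "⟫" => @inner ℂ _ _ x y

lemma aux_inner_proj_right (K : Submodule ℂ H₀) [CompleteSpace K] (v : K) (w : H₀) :
    ⟪(v : H₀), w⟫ = ⟪(v : H₀), ((Submodule.orthogonalProjectionOnto K w : K) : H₀)⟫ := by
  rw [← sub_eq_zero, ← inner_sub_right]
  exact (Submodule.mem_orthogonal K _).1
    (Submodule.sub_starProjection_mem_orthogonal (K := K) w) v v.2

lemma aux_inner_proj_left (K : Submodule ℂ H₀) [CompleteSpace K] (v : K) (w : H₀) :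
    ⟪w, (v : H₀)⟫ = ⟪((Submodule.orthogonalProjectionOnto K w : K) : H₀), (v : H₀)⟫ := by
  rw [← inner_conj_symm, aux_inner_proj_right K v w, inner_conj_symm]

lemma aux_pairing {L : Filter ℕ} {a : ℕ → H₀} {y : H₀} {c : ℕ → H₀} {c₀ : H₀} {R : ℝ}
    (hb : ∀ k, ‖a k‖ ≤ R) (hw : Tendsto (fun k => ⟪a k, c₀⟫) L (𝓝 ⟪y, c₀⟫))
    (hc : Tendsto c L (𝓝 c₀)) :
    Tendsto (fun k => ⟪a k, c k⟫) L (𝓝 ⟪y, c₀⟫) := by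
  have h1 : Tendsto (fun k => ⟪a k, c k⟫ - ⟪a k, c₀⟫) L (𝓝 0) := by
    refine squeeze_zero_norm (a := fun k => R * ‖c k - c₀‖) ?_ ?_
    · intro k
      rw [← inner_sub_right]
      exact (norm_inner_le_norm _ _).trans
        (mul_le_mul_of_nonneg_right (hb k) (norm_nonneg _))
    · have : Tendsto (fun k => c k - c₀) L (𝓝 0) := by
        simpa using hc.sub (tendsto_const_nhds (x := c₀))
      simpa using (this.norm.const_mul R)
  simpa using h1.add hw

end Aux


section Aux2

variable {H₀ : Type*} [NormedAddCommGroup H₀] [InnerProductSpace ℂ H₀]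

local notation "⟪" x ", " y "⟫" => @inner ℂ _ _ x y

lemma aux_ultra_lim (U : Ultrafilter ℕ) (g : ℕ → ℂ) {R : ℝ} (hg : ∀ k, ‖g k‖ ≤ R) :
    ∃ a : ℂ, Tendsto g (U : Filter ℕ) (𝓝 a) := by
  have hle : (U.map g : Filter ℂ) ≤ 𝓟 (Metric.closedBall 0 R) := by
    rw [Filter.le_principal_iff]
    refine Filter.mem_map.2 ?_
    have : ∀ k, g k ∈ Metric.closedBall (0:ℂ) R := fun k => by
      simpa [Complex.dist_eq] using hg k
    exact Filter.univ_mem' this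
  obtain ⟨a, -, ha⟩ := (isCompact_closedBall (0:ℂ) R).ultrafilter_le_nhds (U.map g) hle
  exact ⟨a, ha⟩

lemma aux_weak_limit [CompleteSpace H₀] (U : Ultrafilter ℕ) {a : ℕ → H₀} {R : ℝ}
    (hb : ∀ k, ‖a k‖ ≤ R) :
    ∃ y : H₀, ∀ w : H₀, Tendsto (fun k => ⟪a k, w⟫) (U : Filter ℕ) (𝓝 ⟪y, w⟫) := by
  have hR : 0 ≤ R := (norm_nonneg _).trans (hb 0)
  have hlim : ∀ w : H₀, ∃ z : ℂ, Tendsto (fun k => ⟪a k, w⟫) (U : Filter ℕ) (𝓝 z) := by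
    intro w
    refine aux_ultra_lim U _ (R := R * ‖w‖) fun k => ?_
    exact (norm_inner_le_norm _ _).trans (mul_le_mul_of_nonneg_right (hb k) (norm_nonneg _))
  choose l hl using hlim
  have hadd : ∀ w v, l (w + v) = l w + l v := fun w v => by
    refine tendsto_nhds_unique (hl (w + v)) ?_
    simpa [inner_add_right] using (hl w).add (hl v)
  have hsmul : ∀ (c : ℂ) (w : H₀), l (c • w) = c * l w := fun c w => by
    refine tendsto_nhds_unique (hl (c • w)) ?_
    simpa [inner_smul_right] using (hl w).const_mul c
  have hbound : ∀ w, ‖l w‖ ≤ R * ‖w‖ := fun w => by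
    refine le_of_tendsto (hl w).norm (Filter.Eventually.of_forall fun k => ?_)
    exact (norm_inner_le_norm _ _).trans (mul_le_mul_of_nonneg_right (hb k) (norm_nonneg _))
  let G : H₀ →L[ℂ] ℂ :=
    LinearMap.mkContinuous
      { toFun := l, map_add' := hadd, map_smul' := hsmul } R hbound
  refine ⟨(InnerProductSpace.toDual ℂ H₀).symm G, fun w => ?_⟩
  have : ⟪(InnerProductSpace.toDual ℂ H₀).symm G, w⟫ = G w :=
    InnerProductSpace.toDual_symm_apply
  rw [this]
  exact hl w

end Aux2


section Aux3

variable {H₀ : Type*} [NormedAddCommGroup H₀] [InnerProductSpace ℂ H₀]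

local notation "⟪" x ", " y "⟫" => @inner ℂ _ _ x y

/-- The operator `y ↦ B n (P_n y)` as a continuous linear map `H₀ → H₀`. -/
noncomputable def auxT (Hn : ℕ → Submodule ℂ H₀) [∀ n, CompleteSpace (Hn n)]
    (B : ∀ n, Hn n →L[ℂ] Hn n) (n : ℕ) : H₀ →L[ℂ] H₀ :=
  (Hn n).subtypeL.comp ((B n).comp (Submodule.orthogonalProjectionOnto (Hn n)))

lemma auxT_apply (Hn : ℕ → Submodule ℂ H₀) [∀ n, CompleteSpace (Hn n)]
    (B : ∀ n, Hn n →L[ℂ] Hn n) (n : ℕ) (y : H₀) :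
    auxT Hn B n y = ((B n (Submodule.orthogonalProjectionOnto (Hn n) y) : Hn n) : H₀) := rfl

lemma aux_ubound [CompleteSpace H₀] (Hn : ℕ → Submodule ℂ H₀)
    [∀ n, CompleteSpace (Hn n)] (B : ∀ n, Hn n →L[ℂ] Hn n) {g : H₀ → H₀}
    (h : ∀ y : H₀, Tendsto (fun n => ((B n (Submodule.orthogonalProjectionOnto (Hn n) y) : H₀)))
      atTop (𝓝 (g y))) :
    ∃ C : ℝ, 0 ≤ C ∧ ∀ (n : ℕ) (y : H₀),
      ‖((B n (Submodule.orthogonalProjectionOnto (Hn n) y) : Hn n) : H₀)‖ ≤ C * ‖y‖ := by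
  have hpt : ∀ y : H₀, ∃ C : ℝ, ∀ n, ‖auxT Hn B n y‖ ≤ C := by
    intro y
    have hbdd : BddAbove (Set.range fun n => ‖auxT Hn B n y‖) :=
      Filter.Tendsto.bddAbove_range ((h y).norm)
    obtain ⟨C, hC⟩ := hbdd
    exact ⟨C, fun n => hC (Set.mem_range_self n)⟩
  obtain ⟨C', hC'⟩ := banach_steinhaus hpt
  refine ⟨max C' 0, le_max_right _ _, fun n y => ?_⟩
  calc ‖((B n (Submodule.orthogonalProjectionOnto (Hn n) y) : Hn n) : H₀)‖
      = ‖auxT Hn B n y‖ := rfl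
    _ ≤ ‖auxT Hn B n‖ * ‖y‖ := (auxT Hn B n).le_opNorm y
    _ ≤ max C' 0 * ‖y‖ :=
        mul_le_mul_of_nonneg_right ((hC' n).trans (le_max_left _ _)) (norm_nonneg _)

lemma aux_bound_mem (Hn : ℕ → Submodule ℂ H₀) [∀ n, CompleteSpace (Hn n)]
    (B : ∀ n, Hn n →L[ℂ] Hn n) {C : ℝ}
    (hC : ∀ (n : ℕ) (y : H₀), ‖((B n (Submodule.orthogonalProjectionOnto (Hn n) y) : Hn n) : H₀)‖ ≤ C * ‖y‖)
    (n : ℕ) (ξ : Hn n) : ‖B n ξ‖ ≤ C * ‖ξ‖ := by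
  have h1 := hC n (ξ : H₀)
  rw [Submodule.orthogonalProjectionOnto_mem_subspace_eq_self] at h1
  simpa using h1

/-- Strong convergence along a subsequence of indices, with moving argument. -/
lemma aux_joint (Hn : ℕ → Submodule ℂ H₀) [∀ n, CompleteSpace (Hn n)]
    (B : ∀ n, Hn n →L[ℂ] Hn n) {g : H₀ → H₀} {C : ℝ}
    (hC : ∀ (n : ℕ) (y : H₀), ‖((B n (Submodule.orthogonalProjectionOnto (Hn n) y) : Hn n) : H₀)‖ ≤ C * ‖y‖)
    (h : ∀ y : H₀, Tendsto (fun n => ((B n (Submodule.orthogonalProjectionOnto (Hn n) y) : H₀)))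
      atTop (𝓝 (g y)))
    {m : ℕ → ℕ} (hm : Tendsto m atTop atTop) {c : ℕ → H₀} {c₀ : H₀}
    (hc : Tendsto c atTop (𝓝 c₀)) :
    Tendsto (fun k => ((B (m k) (Submodule.orthogonalProjectionOnto (Hn (m k)) (c k)) : H₀)))
      atTop (𝓝 (g c₀)) := by
  have key : Tendsto (fun k => auxT Hn B (m k) (c k)) atTop (𝓝 (g c₀)) := by
    have h1 : Tendsto (fun k => auxT Hn B (m k) (c k) - auxT Hn B (m k) c₀) atTop (𝓝 0) := by
      refine squeeze_zero_norm (a := fun k => C * ‖c k - c₀‖) (fun k => ?_) ?_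
      · rw [← map_sub]
        exact hC (m k) (c k - c₀)
      · have : Tendsto (fun k => c k - c₀) atTop (𝓝 0) := by
          simpa using hc.sub (tendsto_const_nhds (x := c₀))
        simpa using this.norm.const_mul C
    have h2 : Tendsto (fun k => auxT Hn B (m k) c₀) atTop (𝓝 (g c₀)) :=
      (h c₀).comp hm
    simpa using h1.add h2
  exact key

end Aux3

section Core

variable {H₀ : Type*} [NormedAddCommGroup H₀] [InnerProductSpace ℂ H₀]

local notation "⟪" x ", " y "⟫" => @inner ℂ _ _ x y

set_option maxHeartbeats 1000000 in
open ContinuousLinearMap in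
lemma aux_core [CompleteSpace H₀] (H : Submodule ℂ H₀) (Hn : ℕ → Submodule ℂ H₀)
    [CompleteSpace H] [∀ n, CompleteSpace (Hn n)]
    (A : H →L[ℂ] H) (An : ∀ n, Hn n →L[ℂ] Hn n)
    (hAs : ∀ y : H₀, Tendsto (fun n => ((An n (Submodule.orthogonalProjectionOnto (Hn n) y) : H₀))) atTop
      (𝓝 ((A (Submodule.orthogonalProjectionOnto H y) : H₀))))
    (hAadj : ∀ y : H₀, Tendsto (fun n => ((ContinuousLinearMap.adjoint (An n)
        (Submodule.orthogonalProjectionOnto (Hn n) y) : H₀))) atTop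
      (𝓝 ((ContinuousLinearMap.adjoint A (Submodule.orthogonalProjectionOnto H y) : H₀))))
    (hDC : DiscretelyCompact H Hn (fun n => (ContinuousLinearMap.adjoint (An n)).comp (An n))) :
    DiscretelyCompact H Hn An := by
  obtain ⟨C, hC0, hC⟩ := aux_ubound Hn An hAs
  obtain ⟨D, hD0, hD⟩ := aux_ubound Hn (fun n => adjoint (An n)) hAadj
  intro φ hφ x hx
  obtain ⟨M, hM⟩ := hx
  have hM0 : 0 ≤ M := (norm_nonneg _).trans (hM 0)
  obtain ⟨ψ, hψ, z, hzH, hz⟩ := hDC φ hφ x ⟨M, hM⟩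
  set n : ℕ → ℕ := fun k => φ (ψ k) with hn
  have hmono : StrictMono n := hφ.comp hψ
  have hmT : Tendsto n atTop atTop := hmono.tendsto_atTop
  set ξ : ∀ k : ℕ, Hn (n k) := fun k => x (ψ k) with hξ
  have hξb : ∀ k, ‖((ξ k : H₀))‖ ≤ M := fun k => by simpa using hM (ψ k)
  set U : Ultrafilter ℕ := Ultrafilter.of atTop with hUdef
  have hU : (U : Filter ℕ) ≤ atTop := Ultrafilter.of_le _
  obtain ⟨xw, hxw⟩ := aux_weak_limit U hξb
  set u' : H := A (Submodule.orthogonalProjectionOnto H xw) with hu'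
  set u : H₀ := (u' : H₀) with hu
  set uk : ℕ → H₀ := fun k => ((An (n k) (ξ k) : Hn (n k)) : H₀) with huk
  set zk : ℕ → H₀ := fun k =>
    ((ContinuousLinearMap.adjoint (An (n k)) (An (n k) (ξ k)) : Hn (n k)) : H₀) with hzk
  have hz' : Tendsto zk atTop (𝓝 z) := hz
  have hukb : ∀ k, ‖uk k‖ ≤ C * M := fun k => by
    have h1 : ‖An (n k) (ξ k)‖ ≤ C * ‖ξ k‖ := aux_bound_mem Hn An hC (n k) (ξ k)
    have h2 : ‖(ξ k : H₀)‖ = ‖ξ k‖ := rfl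
    calc ‖uk k‖ = ‖An (n k) (ξ k)‖ := rfl
      _ ≤ C * ‖ξ k‖ := h1
      _ ≤ C * M := by
          refine mul_le_mul_of_nonneg_left ?_ hC0
          rw [← h2]; exact hξb k
  -- (i) representation of ⟪uk k, w⟫
  have hform : ∀ (k : ℕ) (w : H₀), ⟪uk k, w⟫ =
      ⟪((ξ k : Hn (n k)) : H₀),
        ((ContinuousLinearMap.adjoint (An (n k))
          (Submodule.orthogonalProjectionOnto (Hn (n k)) w) : Hn (n k)) : H₀)⟫ := by
    intro k w
    calc ⟪uk k, w⟫
        = ⟪uk k, ((Submodule.orthogonalProjectionOnto (Hn (n k)) w : Hn (n k)) : H₀)⟫ :=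
          aux_inner_proj_right (Hn (n k)) (An (n k) (ξ k)) w
      _ = ⟪An (n k) (ξ k), Submodule.orthogonalProjectionOnto (Hn (n k)) w⟫ :=
          ((Hn (n k)).coe_inner _ _).symm
      _ = ⟪ξ k, ContinuousLinearMap.adjoint (An (n k)) (Submodule.orthogonalProjectionOnto (Hn (n k)) w)⟫ :=
          (ContinuousLinearMap.adjoint_inner_right _ _ _).symm
      _ = _ := (Hn (n k)).coe_inner _ _
  -- identification of the weak limit pairing
  have hid : ∀ w : H₀,
      ⟪xw, ((ContinuousLinearMap.adjoint A (Submodule.orthogonalProjectionOnto H w) : H) : H₀)⟫ = ⟪u, w⟫ := by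
    intro w
    calc ⟪xw, ((ContinuousLinearMap.adjoint A (Submodule.orthogonalProjectionOnto H w) : H) : H₀)⟫
        = ⟪((Submodule.orthogonalProjectionOnto H xw : H) : H₀),
            ((ContinuousLinearMap.adjoint A (Submodule.orthogonalProjectionOnto H w) : H) : H₀)⟫ :=
          aux_inner_proj_left H _ xw
      _ = ⟪Submodule.orthogonalProjectionOnto H xw, ContinuousLinearMap.adjoint A (Submodule.orthogonalProjectionOnto H w)⟫ :=
          (H.coe_inner _ _).symm
      _ = ⟪A (Submodule.orthogonalProjectionOnto H xw), Submodule.orthogonalProjectionOnto H w⟫ :=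
          ContinuousLinearMap.adjoint_inner_right _ _ _
      _ = ⟪u, ((Submodule.orthogonalProjectionOnto H w : H) : H₀)⟫ := H.coe_inner _ _
      _ = ⟪u, w⟫ := (aux_inner_proj_right H u' w).symm
  -- (ii) weak convergence of uk to u along U
  have hweak_u : ∀ w : H₀, Tendsto (fun k => ⟪uk k, w⟫) (U : Filter ℕ) (𝓝 ⟪u, w⟫) := by
    intro w
    have hcseq : Tendsto (fun k =>
        ((ContinuousLinearMap.adjoint (An (n k))
          (Submodule.orthogonalProjectionOnto (Hn (n k)) w) : Hn (n k)) : H₀)) atTop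
        (𝓝 ((ContinuousLinearMap.adjoint A (Submodule.orthogonalProjectionOnto H w) : H) : H₀)) :=
      (hAadj w).comp hmT
    have hpair := aux_pairing (L := (U : Filter ℕ)) hξb (hxw _) (hcseq.mono_left hU)
    rw [hid w] at hpair
    exact hpair.congr fun k => (hform k w).symm
  -- (iii) ⟪uk k, uk k⟫ = ⟪zk k, ξ k⟫
  have hzk_inner : ∀ k, ⟪uk k, uk k⟫ = ⟪zk k, ((ξ k : Hn (n k)) : H₀)⟫ := by
    intro k
    calc ⟪uk k, uk k⟫ = ⟪An (n k) (ξ k), An (n k) (ξ k)⟫ := ((Hn (n k)).coe_inner _ _).symm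
      _ = ⟪ContinuousLinearMap.adjoint (An (n k)) (An (n k) (ξ k)), ξ k⟫ :=
          (ContinuousLinearMap.adjoint_inner_left _ _ _).symm
      _ = _ := (Hn (n k)).coe_inner _ _
  -- (iv) limit of the norms squared
  have hnn : Tendsto (fun k => ⟪uk k, uk k⟫) (U : Filter ℕ) (𝓝 ⟪z, xw⟫) := by
    have hp := aux_pairing (L := (U : Filter ℕ)) hξb (hxw z) (hz'.mono_left hU)
    have hstar : Tendsto (fun k => (starRingEnd ℂ) ⟪((ξ k : Hn (n k)) : H₀), zk k⟫)
        (U : Filter ℕ) (𝓝 ((starRingEnd ℂ) ⟪xw, z⟫)) :=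
      ((Complex.continuous_conj.tendsto _).comp hp)
    rw [inner_conj_symm] at hstar
    refine hstar.congr fun k => ?_
    rw [inner_conj_symm, hzk_inner k]
  -- (v) identify z
  have hz_eq : z = ((ContinuousLinearMap.adjoint A u' : H) : H₀) := by
    refine ext_inner_right ℂ fun w => ?_
    have h1 : Tendsto (fun k => ⟪zk k, w⟫) (U : Filter ℕ) (𝓝 ⟪z, w⟫) :=
      ((hz'.mono_left hU).inner tendsto_const_nhds)
    have hform2 : ∀ k, ⟪zk k, w⟫ =
        ⟪uk k, ((An (n k) (Submodule.orthogonalProjectionOnto (Hn (n k)) w) : Hn (n k)) : H₀)⟫ := by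
      intro k
      calc ⟪zk k, w⟫
          = ⟪zk k, ((Submodule.orthogonalProjectionOnto (Hn (n k)) w : Hn (n k)) : H₀)⟫ :=
            aux_inner_proj_right (Hn (n k)) _ w
        _ = ⟪ContinuousLinearMap.adjoint (An (n k)) (An (n k) (ξ k)),
              Submodule.orthogonalProjectionOnto (Hn (n k)) w⟫ := ((Hn (n k)).coe_inner _ _).symm
        _ = ⟪An (n k) (ξ k), An (n k) (Submodule.orthogonalProjectionOnto (Hn (n k)) w)⟫ :=
            ContinuousLinearMap.adjoint_inner_left _ _ _
        _ = _ := (Hn (n k)).coe_inner _ _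
    have hcseq : Tendsto (fun k =>
        ((An (n k) (Submodule.orthogonalProjectionOnto (Hn (n k)) w) : Hn (n k)) : H₀)) atTop
        (𝓝 ((A (Submodule.orthogonalProjectionOnto H w) : H) : H₀)) := (hAs w).comp hmT
    have h2 := aux_pairing (L := (U : Filter ℕ)) hukb
      (hweak_u ((A (Submodule.orthogonalProjectionOnto H w) : H) : H₀)) (hcseq.mono_left hU)
    have h2' : Tendsto (fun k => ⟪zk k, w⟫) (U : Filter ℕ)
        (𝓝 ⟪u, ((A (Submodule.orthogonalProjectionOnto H w) : H) : H₀)⟫) :=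
      h2.congr fun k => (hform2 k).symm
    have hzw : ⟪z, w⟫ = ⟪u, ((A (Submodule.orthogonalProjectionOnto H w) : H) : H₀)⟫ :=
      tendsto_nhds_unique h1 h2'
    rw [hzw]
    calc ⟪u, ((A (Submodule.orthogonalProjectionOnto H w) : H) : H₀)⟫
        = ⟪u', A (Submodule.orthogonalProjectionOnto H w)⟫ := (H.coe_inner _ _).symm
      _ = ⟪ContinuousLinearMap.adjoint A u', Submodule.orthogonalProjectionOnto H w⟫ :=
          (ContinuousLinearMap.adjoint_inner_left _ _ _).symm
      _ = ⟪((ContinuousLinearMap.adjoint A u' : H) : H₀),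
            ((Submodule.orthogonalProjectionOnto H w : H) : H₀)⟫ := H.coe_inner _ _
      _ = ⟪((ContinuousLinearMap.adjoint A u' : H) : H₀), w⟫ :=
          (aux_inner_proj_right H _ w).symm
  -- (vi) ⟪z, xw⟫ = ⟪u, u⟫
  have hzx : ⟪z, xw⟫ = ⟪u, u⟫ := by
    have hproj : Submodule.orthogonalProjectionOnto H u = u' := Submodule.orthogonalProjectionOnto_mem_subspace_eq_self u'
    have h1 : ⟪xw, ((ContinuousLinearMap.adjoint A u' : H) : H₀)⟫ = ⟪u, u⟫ := by
      have := hid u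
      rwa [hproj] at this
    rw [hz_eq, ← inner_conj_symm, h1, inner_conj_symm]
  -- (vii) the inner product of the differences tends to zero
  have hdiff : Tendsto (fun k => ⟪uk k - u, uk k - u⟫) (U : Filter ℕ) (𝓝 0) := by
    have e : ∀ k, ⟪uk k - u, uk k - u⟫ =
        ⟪uk k, uk k⟫ - ⟪uk k, u⟫ - ⟪u, uk k⟫ + ⟪u, u⟫ := fun k => by
      simp only [inner_sub_left, inner_sub_right]; ring
    have h1 : Tendsto (fun k => ⟪uk k, uk k⟫) (U : Filter ℕ) (𝓝 ⟪u, u⟫) := by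
      rw [← hzx]; exact hnn
    have h2 : Tendsto (fun k => ⟪uk k, u⟫) (U : Filter ℕ) (𝓝 ⟪u, u⟫) := hweak_u u
    have h3 : Tendsto (fun k => ⟪u, uk k⟫) (U : Filter ℕ) (𝓝 ⟪u, u⟫) := by
      have := (Complex.continuous_conj.tendsto _).comp h2
      simp only [Function.comp_def, inner_conj_symm] at this
      exact this
    have hcomb := ((h1.sub h2).sub h3).add (tendsto_const_nhds (x := ⟪u, u⟫))
    simp only [sub_self, zero_sub, neg_add_cancel] at hcomb
    refine Tendsto.congr (fun k => (e k).symm) ?_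
    simpa using hcomb
  -- (viii) norm convergence along U
  have hnorm : Tendsto (fun k => ‖uk k - u‖) (U : Filter ℕ) (𝓝 0) := by
    have hre : Tendsto (fun k => (⟪uk k - u, uk k - u⟫).re) (U : Filter ℕ) (𝓝 0) := by
      have := (Complex.continuous_re.tendsto 0).comp hdiff
      simpa [Function.comp_def] using this
    have hsq : ∀ k, ‖uk k - u‖ = Real.sqrt ((⟪uk k - u, uk k - u⟫).re) := fun k =>
      norm_eq_sqrt_re_inner (𝕜 := ℂ) _
    have := (Real.continuous_sqrt.tendsto 0).comp hre
    simp only [Real.sqrt_zero] at this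
    exact Tendsto.congr (fun k => (hsq k).symm) this
  -- (ix) extract a subsequence converging along atTop
  have hfreq : ∀ j : ℕ, ∃ᶠ k in atTop, ‖uk k - u‖ < 1 / (j + 1) := by
    intro j
    have hpos : (0:ℝ) < 1 / (j + 1) := by positivity
    have hev : ∀ᶠ k in (U : Filter ℕ), ‖uk k - u‖ < 1 / (j + 1) :=
      hnorm.eventually_lt_const hpos
    exact hev.frequently.filter_mono hU
  obtain ⟨ρ, hρ, hρP⟩ := extraction_forall_of_frequently hfreq
  refine ⟨ψ ∘ ρ, hψ.comp hρ, u, u'.2, ?_⟩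
  have h0 : Tendsto (fun j => uk (ρ j) - u) atTop (𝓝 0) :=
    squeeze_zero_norm (fun j => (hρP j).le) tendsto_one_div_add_atTop_nhds_zero_nat
  have hfin : Tendsto (fun j => uk (ρ j)) atTop (𝓝 u) := by
    have h1 := h0.add (tendsto_const_nhds (x := u))
    rw [zero_add] at h1
    exact h1.congr fun j => by rw [sub_add_cancel]
  exact hfin

end Core

section Easy

variable {H₀ : Type*} [NormedAddCommGroup H₀] [InnerProductSpace ℂ H₀]

lemma aux_compLeft [CompleteSpace H₀] (H : Submodule ℂ H₀) (Hn : ℕ → Submodule ℂ H₀)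
    [CompleteSpace H] [∀ n, CompleteSpace (Hn n)]
    (A : H →L[ℂ] H) (An : ∀ n, Hn n →L[ℂ] Hn n)
    (hAadj : ∀ y : H₀, Tendsto (fun n => ((ContinuousLinearMap.adjoint (An n)
        (Submodule.orthogonalProjectionOnto (Hn n) y) : H₀))) atTop
      (𝓝 ((ContinuousLinearMap.adjoint A (Submodule.orthogonalProjectionOnto H y) : H₀))))
    {D : ℝ}
    (hD : ∀ (n : ℕ) (y : H₀), ‖((ContinuousLinearMap.adjoint (An n)
      (Submodule.orthogonalProjectionOnto (Hn n) y) : Hn n) : H₀)‖ ≤ D * ‖y‖)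
    (hDC : DiscretelyCompact H Hn An) :
    DiscretelyCompact H Hn (fun n => (ContinuousLinearMap.adjoint (An n)).comp (An n)) := by
  intro φ hφ x hx
  obtain ⟨ψ, hψ, y, hyH, hy⟩ := hDC φ hφ x hx
  refine ⟨ψ, hψ, ((ContinuousLinearMap.adjoint A ⟨y, hyH⟩ : H) : H₀), Submodule.coe_mem _, ?_⟩
  have hjoint := aux_joint Hn (fun n => ContinuousLinearMap.adjoint (An n)) hD hAadj
    ((hφ.comp hψ).tendsto_atTop) hy
  have hproj : Submodule.orthogonalProjectionOnto H y = ⟨y, hyH⟩ :=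
    Submodule.orthogonalProjectionOnto_mem_subspace_eq_self (K := H) ⟨y, hyH⟩
  rw [hproj] at hjoint
  exact hjoint.congr fun k => by rw [Submodule.orthogonalProjectionOnto_mem_subspace_eq_self]; rfl

lemma aux_compRight (H : Submodule ℂ H₀) (Hn : ℕ → Submodule ℂ H₀)
    (An B : ∀ n, Hn n →L[ℂ] Hn n) {C : ℝ} (hC0 : 0 ≤ C)
    (hB : ∀ (n : ℕ) (ξ : Hn n), ‖B n ξ‖ ≤ C * ‖ξ‖)
    (hDC : DiscretelyCompact H Hn An) :
    DiscretelyCompact H Hn (fun n => (An n).comp (B n)) := by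
  intro φ hφ x hx
  obtain ⟨M, hM⟩ := hx
  obtain ⟨ψ, hψ, y, hyH, hy⟩ := hDC φ hφ (fun k => B (φ k) (x k))
    ⟨C * M, fun k => (hB _ _).trans (mul_le_mul_of_nonneg_left (hM k) hC0)⟩
  exact ⟨ψ, hψ, y, hyH, hy⟩

end Easy


/-- **Discrete compactness of adjoints.** Let `H, H_n` be complete subspaces of
a Hilbert space `H₀` with orthogonal projections `P, P_n` satisfying
`P_n → P` strongly, and let `A ∈ L(H)`, `A_n ∈ L(H_n)` with `A_n P_n → A P` and
`A_n* P_n → A* P` strongly.  Then: `(A_n)` is discretely compact iff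
`(A_n* A_n)` is, iff `(A_n*)` is. -/
theorem stmt6 {H₀ : Type*} [NormedAddCommGroup H₀] [InnerProductSpace ℂ H₀]
    [CompleteSpace H₀] (H : Submodule ℂ H₀) (Hn : ℕ → Submodule ℂ H₀)
    [CompleteSpace H] [∀ n, CompleteSpace (Hn n)]
    (A : H →L[ℂ] H) (An : ∀ n, Hn n →L[ℂ] Hn n)
    (hPs : ∀ y : H₀, Tendsto (fun n => ((Submodule.orthogonalProjectionOnto (Hn n) y : H₀)))
      atTop (𝓝 ((Submodule.orthogonalProjectionOnto H y : H₀))))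
    (hAs : ∀ y : H₀, Tendsto
      (fun n => ((An n (Submodule.orthogonalProjectionOnto (Hn n) y) : H₀))) atTop
      (𝓝 ((A (Submodule.orthogonalProjectionOnto H y) : H₀))))
    (hAadj : ∀ y : H₀, Tendsto
      (fun n => ((ContinuousLinearMap.adjoint (An n)
        (Submodule.orthogonalProjectionOnto (Hn n) y) : H₀))) atTop
      (𝓝 ((ContinuousLinearMap.adjoint A (Submodule.orthogonalProjectionOnto H y) : H₀)))) :
    (DiscretelyCompact H Hn An ↔
      DiscretelyCompact H Hn
        (fun n => (ContinuousLinearMap.adjoint (An n)).comp (An n))) ∧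
    (DiscretelyCompact H Hn An ↔
      DiscretelyCompact H Hn (fun n => ContinuousLinearMap.adjoint (An n))) := by
  obtain ⟨C, hC0, hC⟩ := aux_ubound Hn An hAs
  obtain ⟨D, hD0, hD⟩ := aux_ubound Hn (fun n => ContinuousLinearMap.adjoint (An n)) hAadj
  have hAbnd : ∀ (n : ℕ) (ξ : Hn n), ‖An n ξ‖ ≤ C * ‖ξ‖ := aux_bound_mem Hn An hC
  have hAdjbnd : ∀ (n : ℕ) (ξ : Hn n), ‖ContinuousLinearMap.adjoint (An n) ξ‖ ≤ D * ‖ξ‖ :=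
    aux_bound_mem Hn _ hD
  have coreA := aux_core H Hn A An hAs hAadj
  have hAs' : ∀ y : H₀, Tendsto (fun n =>
      ((ContinuousLinearMap.adjoint (ContinuousLinearMap.adjoint (An n))
        (Submodule.orthogonalProjectionOnto (Hn n) y) : H₀))) atTop
      (𝓝 ((ContinuousLinearMap.adjoint (ContinuousLinearMap.adjoint A)
        (Submodule.orthogonalProjectionOnto H y) : H₀))) := by
    simp only [ContinuousLinearMap.adjoint_adjoint]; exact hAs
  have coreAdj := aux_core H Hn (ContinuousLinearMap.adjoint A)
    (fun n => ContinuousLinearMap.adjoint (An n)) hAadj hAs'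
  have hsimp : (fun n => (ContinuousLinearMap.adjoint
        (ContinuousLinearMap.adjoint (An n))).comp (ContinuousLinearMap.adjoint (An n))) =
      fun n => (An n).comp (ContinuousLinearMap.adjoint (An n)) := by
    funext n; rw [ContinuousLinearMap.adjoint_adjoint]
  rw [hsimp] at coreAdj
  refine ⟨⟨aux_compLeft H Hn A An hAadj hD, coreA⟩, ?_, ?_⟩
  · intro h
    exact coreAdj (aux_compRight H Hn An (fun n => ContinuousLinearMap.adjoint (An n))
      hD0 hAdjbnd h)
  · intro h
    exact coreA (aux_compRight H Hn (fun n => ContinuousLinearMap.adjoint (An n)) An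
      hC0 hAbnd h)
end

section
/- Let H, H_n be closed subspaces of a Hilbert space H_0 with orthogonal projections P, P_n, P_n → P strongly. Let A ∈ L(H), A_n ∈ L(H_n) with all A_n compact and (A_n) discretely compact. If A_n P_n → A P strongly and A_n* P_n → A* P strongly, then A is compact and A_n P_n → A P in operator norm. -/
open Filter Topology

/-- **Strong convergence implies norm convergence for discretely compact
sequences of compact operators:** with `P, P_n` the orthogonal projections of
the Hilbert space `H₀` onto complete subspaces `H, H_n` and `P_n → P` strongly;
if all `A_n ∈ L(H_n)` are compact, `(A_n)` is discretely compact, and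
`A_n P_n → A P`, `A_n* P_n → A* P` strongly, then `A` is compact and
`A_n P_n → A P` in operator norm. -/
theorem stmt7 {H₀ : Type*} [NormedAddCommGroup H₀] [InnerProductSpace ℂ H₀]
    [CompleteSpace H₀] (H : Submodule ℂ H₀) (Hn : ℕ → Submodule ℂ H₀)
    [CompleteSpace H] [∀ n, CompleteSpace (Hn n)]
    (A : H →L[ℂ] H) (An : ∀ n, Hn n →L[ℂ] Hn n)
    (hcpt : ∀ n, IsCompactOperator (An n))
    (hdc : DiscretelyCompact H Hn An)
    (hPs : ∀ y : H₀, Tendsto (fun n => ((Submodule.orthogonalProjectionOnto (Hn n) y : H₀)))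
      atTop (𝓝 ((Submodule.orthogonalProjectionOnto H y : H₀))))
    (hAs : ∀ y : H₀, Tendsto
      (fun n => ((An n (Submodule.orthogonalProjectionOnto (Hn n) y) : H₀))) atTop
      (𝓝 ((A (Submodule.orthogonalProjectionOnto H y) : H₀))))
    (hAadj : ∀ y : H₀, Tendsto
      (fun n => ((ContinuousLinearMap.adjoint (An n)
        (Submodule.orthogonalProjectionOnto (Hn n) y) : H₀))) atTop
      (𝓝 ((ContinuousLinearMap.adjoint A (Submodule.orthogonalProjectionOnto H y) : H₀)))) :
    IsCompactOperator A ∧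
    Tendsto (fun n =>
      ‖(Hn n).subtypeL.comp ((An n).comp (Submodule.orthogonalProjectionOnto (Hn n))) -
        H.subtypeL.comp (A.comp (Submodule.orthogonalProjectionOnto H))‖) atTop (𝓝 0) := by
  classical
  set Bn : ℕ → H₀ →L[ℂ] H₀ :=
    fun n => (Hn n).subtypeL.comp ((An n).comp (Submodule.orthogonalProjectionOnto (Hn n))) with hBndef
  set B : H₀ →L[ℂ] H₀ := H.subtypeL.comp (A.comp (Submodule.orthogonalProjectionOnto H)) with hBdef
  have hBnapp : ∀ n (v : H₀), Bn n v = ((An n (Submodule.orthogonalProjectionOnto (Hn n) v)) : H₀) := by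
    intro n v; simp [hBndef]
  have hBapp : ∀ v : H₀, B v = ((A (Submodule.orthogonalProjectionOnto H v)) : H₀) := by
    intro v; simp [hBdef]
  -- strong convergence of `Bn` to `B`
  have hstrong : ∀ v : H₀, Tendsto (fun n => Bn n v) atTop (𝓝 (B v)) := by
    intro v
    simpa [hBnapp, hBapp] using hAs v
  -- adjoints
  have hadjn : ∀ n, (ContinuousLinearMap.adjoint (Bn n)) =
      (Hn n).subtypeL.comp ((ContinuousLinearMap.adjoint (An n)).comp
        (Submodule.orthogonalProjectionOnto (Hn n))) := by
    intro n
    rw [hBndef]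
    rw [ContinuousLinearMap.adjoint_comp, ContinuousLinearMap.adjoint_comp,
      Submodule.adjoint_subtypeL, Submodule.adjoint_orthogonalProjection]
    rfl
  have hadjB : (ContinuousLinearMap.adjoint B) =
      H.subtypeL.comp ((ContinuousLinearMap.adjoint A).comp (Submodule.orthogonalProjectionOnto H)) := by
    rw [hBdef]
    rw [ContinuousLinearMap.adjoint_comp, ContinuousLinearMap.adjoint_comp,
      Submodule.adjoint_subtypeL, Submodule.adjoint_orthogonalProjection]
    rfl
  have hstrong_adj : ∀ v : H₀, Tendsto (fun n => (ContinuousLinearMap.adjoint (Bn n)) v)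
      atTop (𝓝 ((ContinuousLinearMap.adjoint B) v)) := by
    intro v
    simp only [hadjn, hadjB, ContinuousLinearMap.comp_apply, Submodule.subtypeL_apply]
    exact hAadj v
  -- orthogonal projections are norm-nonincreasing
  have hPle : ∀ (U : Submodule ℂ H₀) [CompleteSpace U] (v : H₀),
      ‖((Submodule.orthogonalProjectionOnto U v : H₀))‖ ≤ ‖v‖ := by
    intro U _ v
    calc ‖((Submodule.orthogonalProjectionOnto U v : H₀))‖ = ‖Submodule.orthogonalProjectionOnto U v‖ := rfl
      _ ≤ ‖Submodule.orthogonalProjectionOnto U‖ * ‖v‖ := (Submodule.orthogonalProjectionOnto U).le_opNorm v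
      _ ≤ 1 * ‖v‖ := by
          exact mul_le_mul_of_nonneg_right (Submodule.orthogonalProjectionOnto_norm_le U) (norm_nonneg v)
      _ = ‖v‖ := one_mul _
  -- Step A : extraction for `Bn` along any subsequence
  have hsubBn : ∀ (φ : ℕ → ℕ), StrictMono φ → ∀ (x : ℕ → H₀), (∀ k, ‖x k‖ ≤ 1) →
      ∃ ψ : ℕ → ℕ, StrictMono ψ ∧ ∃ y ∈ H,
        Tendsto (fun k => Bn (φ (ψ k)) (x (ψ k))) atTop (𝓝 y) := by
    intro φ hφ x hx
    obtain ⟨ψ, hψ, y, hyH, hy⟩ := hdc φ hφ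
      (fun k => Submodule.orthogonalProjectionOnto (Hn (φ k)) (x k))
      ⟨1, fun k => by
        calc ‖Submodule.orthogonalProjectionOnto (Hn (φ k)) (x k)‖
            = ‖((Submodule.orthogonalProjectionOnto (Hn (φ k)) (x k) : H₀))‖ := rfl
          _ ≤ ‖x k‖ := hPle _ _
          _ ≤ 1 := hx k⟩
    exact ⟨ψ, hψ, y, hyH, by simpa [hBnapp] using hy⟩
  -- Step B : extraction for `B`
  have hsubB : ∀ (x : ℕ → H₀), (∀ k, ‖x k‖ ≤ 1) →
      ∃ ψ : ℕ → ℕ, StrictMono ψ ∧ ∃ y ∈ H,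
        Tendsto (fun k => B (x (ψ k))) atTop (𝓝 y) := by
    intro x hx
    have hN : ∀ k : ℕ, ∃ N : ℕ, ∀ m ≥ N, ‖Bn m (x k) - B (x k)‖ ≤ 1 / (k + 1 : ℝ) := by
      intro k
      have hpos : (0 : ℝ) < 1 / (k + 1 : ℝ) := by positivity
      have := (Metric.tendsto_atTop.1 (hstrong (x k))) (1 / (k + 1 : ℝ)) hpos
      obtain ⟨N, hNs⟩ := this
      exact ⟨N, fun m hm => by
        have := hNs m hm
        rw [dist_eq_norm] at this
        exact this.le⟩
    choose N hNspec using hN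
    set n : ℕ → ℕ := fun k => k + (Finset.range (k + 1)).sup N with hn
    have hmono : StrictMono n := by
      apply strictMono_nat_of_lt_succ
      intro k
      have : (Finset.range (k + 1)).sup N ≤ (Finset.range (k + 1 + 1)).sup N :=
        Finset.sup_mono (Finset.range_subset_range.2 (by omega))
      simp only [hn]
      omega
    have hnk : ∀ k, ‖Bn (n k) (x k) - B (x k)‖ ≤ 1 / (k + 1 : ℝ) := by
      intro k
      apply hNspec k (n k)
      have : N k ≤ (Finset.range (k + 1)).sup N :=
        Finset.le_sup (Finset.mem_range.2 (by omega))
      simp only [hn]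
      omega
    obtain ⟨ψ, hψ, y, hyH, hy⟩ := hsubBn n hmono x hx
    refine ⟨ψ, hψ, y, hyH, ?_⟩
    rw [tendsto_iff_norm_sub_tendsto_zero]
    have hyn : Tendsto (fun k => ‖Bn (n (ψ k)) (x (ψ k)) - y‖) atTop (𝓝 0) := by
      have := (hy.sub (tendsto_const_nhds (x := y))).norm
      simpa using this
    have hinv : Tendsto (fun k : ℕ => 1 / ((ψ k : ℝ) + 1)) atTop (𝓝 0) := by
      apply squeeze_zero (fun k => by positivity) (g := fun k : ℕ => 1 / ((k : ℝ) + 1))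
      · intro k
        apply one_div_le_one_div_of_le (by positivity)
        have hk : k ≤ ψ k := hψ.le_apply
        push_cast
        linarith [(Nat.cast_le (α := ℝ)).2 hk]
      · exact tendsto_one_div_add_atTop_nhds_zero_nat
    apply squeeze_zero (fun k => norm_nonneg _)
      (g := fun k => 1 / ((ψ k : ℝ) + 1) + ‖Bn (n (ψ k)) (x (ψ k)) - y‖)
    · intro k
      calc ‖B (x (ψ k)) - y‖
          ≤ ‖B (x (ψ k)) - Bn (n (ψ k)) (x (ψ k))‖ + ‖Bn (n (ψ k)) (x (ψ k)) - y‖ :=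
            norm_sub_le_norm_sub_add_norm_sub _ _ _
        _ ≤ 1 / ((ψ k : ℝ) + 1) + ‖Bn (n (ψ k)) (x (ψ k)) - y‖ := by
            have := hnk (ψ k)
            rw [norm_sub_rev]
            push_cast at this ⊢
            linarith
    · simpa using hinv.add hyn
  -- Step C : weak convergence to zero
  have hweak : ∀ (x : ℕ → H₀), (∀ k, ‖x k‖ ≤ 1) → ∀ (φ : ℕ → ℕ), StrictMono φ →
      ∀ u : H₀, Tendsto (fun k => (inner ℂ ((Bn (φ k) - B) (x k)) u : ℂ)) atTop (𝓝 0) := by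
    intro x hx φ hφ u
    have hadiff : Tendsto (fun m => ‖(ContinuousLinearMap.adjoint (Bn m)) u -
        (ContinuousLinearMap.adjoint B) u‖) atTop (𝓝 0) := by
      have := ((hstrong_adj u).sub
        (tendsto_const_nhds (x := (ContinuousLinearMap.adjoint B) u))).norm
      simpa using this
    rw [tendsto_zero_iff_norm_tendsto_zero]
    apply squeeze_zero (fun k => norm_nonneg _)
      (g := fun k => ‖(ContinuousLinearMap.adjoint (Bn (φ k))) u -
        (ContinuousLinearMap.adjoint B) u‖)
    · intro k
      have heq : (inner ℂ ((Bn (φ k) - B) (x k)) u : ℂ) =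
          inner ℂ (x k) ((ContinuousLinearMap.adjoint (Bn (φ k))) u -
            (ContinuousLinearMap.adjoint B) u) := by
        rw [inner_sub_right, ContinuousLinearMap.sub_apply, inner_sub_left,
          ContinuousLinearMap.adjoint_inner_right, ContinuousLinearMap.adjoint_inner_right]
      rw [heq]
      calc ‖(inner ℂ (x k) ((ContinuousLinearMap.adjoint (Bn (φ k))) u -
              (ContinuousLinearMap.adjoint B) u) : ℂ)‖
          ≤ ‖x k‖ * ‖(ContinuousLinearMap.adjoint (Bn (φ k))) u -
              (ContinuousLinearMap.adjoint B) u‖ := norm_inner_le_norm _ _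
        _ ≤ 1 * ‖(ContinuousLinearMap.adjoint (Bn (φ k))) u -
              (ContinuousLinearMap.adjoint B) u‖ :=
            mul_le_mul_of_nonneg_right (hx k) (norm_nonneg _)
        _ = _ := one_mul _
    · exact hadiff.comp hφ.tendsto_atTop
  -- Main step : norm convergence
  have hnorm : Tendsto (fun m => ‖Bn m - B‖) atTop (𝓝 0) := by
    by_contra hcon
    obtain ⟨ε, hε, hfreq⟩ : ∃ ε > 0, ∃ᶠ m in atTop, ε ≤ ‖Bn m - B‖ := by
      rw [Metric.tendsto_atTop] at hcon
      push_neg at hcon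
      obtain ⟨ε, hε, hcon⟩ := hcon
      refine ⟨ε, hε, frequently_atTop.2 fun N => ?_⟩
      obtain ⟨m, hm, hd⟩ := hcon N
      refine ⟨m, hm, ?_⟩
      rw [dist_eq_norm, sub_zero] at hd
      calc ε ≤ |‖Bn m - B‖| := hd
        _ = ‖Bn m - B‖ := abs_of_nonneg (norm_nonneg _)
    obtain ⟨φ, hφ, hφε⟩ := extraction_of_frequently_atTop hfreq
    -- choose almost-maximizing unit vectors
    have hxex : ∀ k : ℕ, ∃ v : H₀, ‖v‖ ≤ 1 ∧ ε / 2 ≤ ‖(Bn (φ k) - B) v‖ := by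
      intro k
      have h2 : ε / 2 < ‖Bn (φ k) - B‖ := lt_of_lt_of_le (by linarith) (hφε k)
      obtain ⟨v, hv1, hv2⟩ := (Bn (φ k) - B).exists_lt_apply_of_lt_opNorm h2
      exact ⟨v, hv1.le, hv2.le⟩
    choose x hx1 hx2 using hxex
    obtain ⟨ψ₁, hψ₁, y, hyH, hy⟩ := hsubBn φ hφ x hx1
    obtain ⟨ψ₂, hψ₂, z, hzH, hz⟩ := hsubB (fun k => x (ψ₁ k)) (fun k => hx1 (ψ₁ k))
    have hy2 : Tendsto (fun k => Bn (φ (ψ₁ (ψ₂ k))) (x (ψ₁ (ψ₂ k)))) atTop (𝓝 y) :=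
      hy.comp hψ₂.tendsto_atTop
    have hg : Tendsto (fun k => (Bn (φ (ψ₁ (ψ₂ k))) - B) (x (ψ₁ (ψ₂ k)))) atTop
        (𝓝 (y - z)) := by
      have := hy2.sub hz
      simpa using this
    have hlow : ε / 2 ≤ ‖y - z‖ := by
      have hnt : Tendsto (fun k => ‖(Bn (φ (ψ₁ (ψ₂ k))) - B) (x (ψ₁ (ψ₂ k)))‖) atTop
          (𝓝 ‖y - z‖) := hg.norm
      exact ge_of_tendsto hnt (Eventually.of_forall fun k => hx2 (ψ₁ (ψ₂ k)))
    -- weak limit is zero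
    have hw : Tendsto (fun k => (inner ℂ ((Bn (φ (ψ₁ (ψ₂ k))) - B) (x (ψ₁ (ψ₂ k)))) (y - z) : ℂ))
        atTop (𝓝 0) :=
      hweak (fun k => x (ψ₁ (ψ₂ k))) (fun k => hx1 (ψ₁ (ψ₂ k)))
        (φ ∘ ψ₁ ∘ ψ₂) (hφ.comp (hψ₁.comp hψ₂)) (y - z)
    have hw2 : Tendsto (fun k => (inner ℂ ((Bn (φ (ψ₁ (ψ₂ k))) - B) (x (ψ₁ (ψ₂ k)))) (y - z) : ℂ))
        atTop (𝓝 (inner ℂ (y - z) (y - z))) :=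
      hg.inner tendsto_const_nhds
    have hzero : (inner ℂ (y - z) (y - z) : ℂ) = 0 := tendsto_nhds_unique hw2 hw
    rw [inner_self_eq_zero, sub_eq_zero] at hzero
    rw [hzero] at hlow
    simp at hlow
    linarith
  constructor
  · -- compactness of A
    have hBl : Tendsto Bn atTop (𝓝 B) := by
      rw [tendsto_iff_norm_sub_tendsto_zero]
      exact hnorm
    have hBncpt : ∀ m, IsCompactOperator (Bn m) := by
      intro m
      have h1 : IsCompactOperator ((An m).comp (Submodule.orthogonalProjectionOnto (Hn m))) :=
        (hcpt m).comp_clm (Submodule.orthogonalProjectionOnto (Hn m))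
      have h2 := h1.clm_comp (Hn m).subtypeL
      exact h2
    have hBcpt : IsCompactOperator B :=
      isCompactOperator_of_tendsto hBl (Eventually.of_forall hBncpt)
    have hAeq : A = (Submodule.orthogonalProjectionOnto H).comp (B.comp H.subtypeL) := by
      ext v
      simp [hBdef, Submodule.orthogonalProjectionOnto_mem_subspace_eq_self]
    rw [hAeq]
    exact (hBcpt.comp_clm H.subtypeL).clm_comp (Submodule.orthogonalProjectionOnto H)
  · exact hnorm
end

section
/- Let T ∈ C(E), T_n ∈ C(E_n) with T_n →gsr T. If λ lies in Δ_b((T_n)) ∩ ρ(T), then (T_n − λ)⁻¹ P_n → (T − λ)⁻¹ P strongly. Moreover, Δ_b((T_n)) ⊂ ℂ \ σ_app(T), where σ_app(T) is the approximate point spectrum of T. -/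
open Filter Topology

/-- `R` is the resolvent `(T - l)⁻¹` of `T`, i.e. `l ∈ ρ(T)`. -/
def IsResolvent {F : Type*} [NormedAddCommGroup F] [NormedSpace ℂ F]
    (T : F →ₗ.[ℂ] F) (l : ℂ) (R : F →L[ℂ] F) : Prop :=
  (∀ x : T.domain, R (T x - l • (x : F)) = (x : F)) ∧
  (∀ y : F, ∃ h : R y ∈ T.domain, T ⟨R y, h⟩ - l • R y = y)

/-- `l ∈ Δ_b((T_n)_n)`: eventually `l ∈ ρ(T_n)` with uniformly bounded
resolvents. -/
def InRegionOfBoundedness {E₀ : Type*} [NormedAddCommGroup E₀] [NormedSpace ℂ E₀]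
    (En : ℕ → Submodule ℂ E₀) (Tn : ∀ n, En n →ₗ.[ℂ] En n) (l : ℂ) : Prop :=
  ∃ n₀ : ℕ, ∃ M : ℝ, ∀ n, n₀ ≤ n → ∃ R : En n →L[ℂ] En n,
    IsResolvent (Tn n) l R ∧ ‖R‖ ≤ M

/-- `l` belongs to the approximate point spectrum `σ_app(T)`. -/
def InApproxPointSpectrum {F : Type*} [NormedAddCommGroup F] [NormedSpace ℂ F]
    (T : F →ₗ.[ℂ] F) (l : ℂ) : Prop :=
  ∀ ε : ℝ, 0 < ε → ∃ x : T.domain, ‖(x : F)‖ = 1 ∧ ‖T x - l • (x : F)‖ < ε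

/-- The resolvent of a linear relation at a point is unique. -/
lemma resolvent_unique {F : Type*} [NormedAddCommGroup F] [NormedSpace ℂ F]
    (T : F →ₗ.[ℂ] F) (l : ℂ) (R R' : F →L[ℂ] F)
    (hR : IsResolvent T l R) (hR' : IsResolvent T l R') : R = R' := by
  ext y
  obtain ⟨h, hy⟩ := hR'.2 y
  have h2 := hR.1 ⟨R' y, h⟩
  simp only [Submodule.coe_mk] at h2
  rw [hy] at h2
  exact h2

/-- Core approximation: every `x ∈ dom T` is approximated by `xₙ ∈ dom Tₙ`
with `(Tₙ - l) xₙ → (T - l) x`. -/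
lemma approx_core {E₀ : Type*} [NormedAddCommGroup E₀] [NormedSpace ℂ E₀]
    {E : Submodule ℂ E₀} {En : ℕ → Submodule ℂ E₀}
    (P : E₀ →L[ℂ] E) (Pn : ∀ n, E₀ →L[ℂ] En n)
    (hP : ∀ x : E, P (x : E₀) = x)
    (hPs : ∀ y : E₀, Tendsto (fun n => ((Pn n y : E₀))) atTop (𝓝 ((P y : E₀))))
    (T : E →ₗ.[ℂ] E) (Tn : ∀ n, En n →ₗ.[ℂ] En n)
    (n₀g : ℕ) (l₀ : ℂ) (R₀ : E →L[ℂ] E) (Rn₀ : ∀ n, En n →L[ℂ] En n)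
    (hR₀ : IsResolvent T l₀ R₀) (hRn₀ : ∀ n, n₀g ≤ n → IsResolvent (Tn n) l₀ (Rn₀ n))
    (hconv : ∀ y : E₀, Tendsto (fun n => ((Rn₀ n (Pn n y) : E₀))) atTop
        (𝓝 ((R₀ (P y) : E₀))))
    (l : ℂ) (x : T.domain) :
    ∃ xn : ∀ n, En n, ∃ wn : ∀ n, En n,
      Tendsto (fun n => ((xn n : E₀))) atTop (𝓝 (((x : E) : E₀))) ∧
      Tendsto (fun n => ((wn n : E₀))) atTop (𝓝 ((T x - l • (x : E) : E) : E₀)) ∧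
      ∀ n, n₀g ≤ n → ∃ h : xn n ∈ (Tn n).domain,
        Tn n ⟨xn n, h⟩ - l • xn n = wn n := by
  set z : E := T x - l₀ • (x : E) with hz
  refine ⟨fun n => Rn₀ n (Pn n (z : E₀)),
    fun n => Pn n (z : E₀) + (l₀ - l) • Rn₀ n (Pn n (z : E₀)), ?_, ?_, ?_⟩
  · have h1 := hconv (z : E₀)
    rw [hP z] at h1
    have h2 : R₀ z = (x : E) := hR₀.1 x
    rw [h2] at h1
    exact h1
  · have h1 := hPs (z : E₀)
    rw [hP z] at h1
    have h2 := hconv (z : E₀)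
    rw [hP z, hR₀.1 x] at h2
    have h3 : Tendsto
        (fun n => ((Pn n (z : E₀) : E₀) + (l₀ - l) • (Rn₀ n (Pn n (z : E₀)) : E₀)))
        atTop (𝓝 ((z : E₀) + (l₀ - l) • ((x : E) : E₀))) := h1.add (h2.const_smul _)
    have h4 : ((T x - l • (x : E) : E) : E₀) = (z : E₀) + (l₀ - l) • ((x : E) : E₀) := by
      rw [hz]
      push_cast
      module
    rw [h4]
    convert h3 using 2 with n
    simp
  · intro n hn
    obtain ⟨h, hw⟩ := (hRn₀ n hn).2 (Pn n (z : E₀))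
    refine ⟨h, ?_⟩
    have heq : Tn n ⟨Rn₀ n (Pn n (z : E₀)), h⟩ - l • Rn₀ n (Pn n (z : E₀))
        = (Tn n ⟨Rn₀ n (Pn n (z : E₀)), h⟩ - l₀ • Rn₀ n (Pn n (z : E₀)))
          + (l₀ - l) • Rn₀ n (Pn n (z : E₀)) := by module
    rw [heq, hw]

/-- **Resolvents converge on the region of boundedness.**  Suppose
`T_n →gsr T`.  Then `Δ_b((T_n)) ⊆ ℂ \ σ_app(T)`, and for every
`λ ∈ Δ_b((T_n)) ∩ ρ(T)` one has `(T_n − λ)⁻¹ P_n → (T − λ)⁻¹ P` strongly. -/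
theorem stmt16 {E₀ : Type*} [NormedAddCommGroup E₀] [NormedSpace ℂ E₀]
    (E : Submodule ℂ E₀) (En : ℕ → Submodule ℂ E₀)
    (hE : IsClosed (E : Set E₀)) (hEn : ∀ n, IsClosed ((En n : Set E₀)))
    (P : E₀ →L[ℂ] E) (Pn : ∀ n, E₀ →L[ℂ] En n)
    (hP : ∀ x : E, P (x : E₀) = x) (hPn : ∀ n, ∀ x : En n, Pn n (x : E₀) = x)
    (hPs : ∀ y : E₀, Tendsto (fun n => ((Pn n y : E₀))) atTop (𝓝 ((P y : E₀))))
    (T : E →ₗ.[ℂ] E) (Tn : ∀ n, En n →ₗ.[ℂ] En n)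
    (hT : IsClosed (T.graph : Set (E × E)))
    (hTn : ∀ n, IsClosed ((Tn n).graph : Set (En n × En n)))
    (hgsr : ∃ (n₀ : ℕ) (l₀ : ℂ) (R₀ : E →L[ℂ] E)
        (Rn₀ : ∀ n, En n →L[ℂ] En n),
      IsResolvent T l₀ R₀ ∧ (∀ n, n₀ ≤ n → IsResolvent (Tn n) l₀ (Rn₀ n)) ∧
      ∀ y : E₀, Tendsto (fun n => ((Rn₀ n (Pn n y) : E₀))) atTop
        (𝓝 ((R₀ (P y) : E₀)))) :
    (∀ l : ℂ, InRegionOfBoundedness En Tn l → ¬ InApproxPointSpectrum T l) ∧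
    (∀ l : ℂ, InRegionOfBoundedness En Tn l →
      ∀ R : E →L[ℂ] E, IsResolvent T l R →
      ∀ (n₀ : ℕ) (Rn : ∀ n, En n →L[ℂ] En n),
        (∀ n, n₀ ≤ n → IsResolvent (Tn n) l (Rn n)) →
        ∀ y : E₀, Tendsto (fun n => ((Rn n (Pn n y) : E₀))) atTop
          (𝓝 ((R (P y) : E₀)))) := by
  obtain ⟨n₀g, l₀, R₀, Rn₀, hR₀, hRn₀, hconv⟩ := hgsr
  have ncoe : ∀ (S : Submodule ℂ E₀) (v : S), ‖(v : E₀)‖ = ‖v‖ := fun _ _ => rfl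
  constructor
  · -- Part 1: Δ_b ⊆ ℂ \ σ_app(T)
    rintro l ⟨n₁, M, hM⟩ happ
    obtain ⟨R₁, _, hR₁⟩ := hM n₁ le_rfl
    have hM0 : 0 ≤ M := le_trans (norm_nonneg R₁) hR₁
    obtain ⟨x, hx1, hxe⟩ := happ (1 / (M + 1)) (by positivity)
    obtain ⟨xn, wn, hxn, hwn, hdom⟩ :=
      approx_core P Pn hP hPs T Tn n₀g l₀ R₀ Rn₀ hR₀ hRn₀ hconv l x
    have key : ∀ᶠ n in atTop, ‖(xn n : E₀)‖ ≤ M * ‖(wn n : E₀)‖ := by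
      filter_upwards [eventually_ge_atTop (max n₁ n₀g)] with n hn
      obtain ⟨Rl, hRl, hRlM⟩ := hM n (le_trans (le_max_left _ _) hn)
      obtain ⟨h, hw⟩ := hdom n (le_trans (le_max_right _ _) hn)
      have hfix : Rl (wn n) = xn n := by
        rw [← hw]
        exact hRl.1 ⟨xn n, h⟩
      calc ‖(xn n : E₀)‖ = ‖Rl (wn n)‖ := by rw [hfix, ncoe]
        _ ≤ ‖Rl‖ * ‖wn n‖ := Rl.le_opNorm _
        _ ≤ M * ‖wn n‖ := mul_le_mul_of_nonneg_right hRlM (norm_nonneg _)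
        _ = M * ‖(wn n : E₀)‖ := by rw [ncoe]
    have lim1 : Tendsto (fun n => ‖(xn n : E₀)‖) atTop (𝓝 1) := by
      have := hxn.norm
      rwa [ncoe, hx1] at this
    have lim2 : Tendsto (fun n => M * ‖(wn n : E₀)‖) atTop
        (𝓝 (M * ‖T x - l • (x : E)‖)) := by
      have := (hwn.norm).const_mul M
      rwa [ncoe] at this
    have hle : (1 : ℝ) ≤ M * ‖T x - l • (x : E)‖ :=
      le_of_tendsto_of_tendsto lim1 lim2 key
    have hlt : M * ‖T x - l • (x : E)‖ < 1 := by
      have h1 : M * ‖T x - l • (x : E)‖ ≤ M * (1 / (M + 1)) :=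
        mul_le_mul_of_nonneg_left (le_of_lt hxe) hM0
      have h2 : M * (1 / (M + 1)) < 1 := by
        rw [mul_one_div, div_lt_one (by positivity)]
        linarith
      linarith
    linarith
  · -- Part 2: strong convergence of resolvents
    rintro l ⟨n₁, M, hM⟩ R hR n₀ Rn hRn y
    obtain ⟨R₁, _, hR₁⟩ := hM n₁ le_rfl
    have hM0 : 0 ≤ M := le_trans (norm_nonneg R₁) hR₁
    obtain ⟨hd, hPy⟩ := hR.2 (P y)
    set x : T.domain := ⟨R (P y), hd⟩ with hxdef
    obtain ⟨xn, wn, hxn, hwn, hdom⟩ :=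
      approx_core P Pn hP hPs T Tn n₀g l₀ R₀ Rn₀ hR₀ hRn₀ hconv l x
    have hwn' : Tendsto (fun n => ((wn n : E₀))) atTop (𝓝 ((P y : E₀))) := by
      have : (T x - l • (x : E) : E) = P y := hPy
      rwa [this] at hwn
    -- squeeze: ‖Rn n (Pn n y) - xn n‖ → 0
    have key : ∀ᶠ n in atTop,
        ‖((Rn n (Pn n y) : E₀)) - ((xn n : E₀))‖
          ≤ M * ‖((Pn n y : E₀)) - ((wn n : E₀))‖ := by
      filter_upwards [eventually_ge_atTop (max (max n₁ n₀g) n₀)] with n hn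
      obtain ⟨Rl, hRl, hRlM⟩ := hM n (le_trans (le_trans (le_max_left _ _) (le_max_left _ _)) hn)
      have hEq : Rn n = Rl :=
        resolvent_unique (Tn n) l _ _ (hRn n (le_trans (le_max_right _ _) hn)) hRl
      obtain ⟨h, hw⟩ := hdom n (le_trans (le_trans (le_max_right _ _) (le_max_left _ _)) hn)
      have hfix : Rl (wn n) = xn n := by
        rw [← hw]
        exact hRl.1 ⟨xn n, h⟩
      have hsub : Rn n (Pn n y) - xn n = Rl (Pn n y - wn n) := by
        rw [hEq, map_sub, hfix]
      calc ‖((Rn n (Pn n y) : E₀)) - ((xn n : E₀))‖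
          = ‖Rn n (Pn n y) - xn n‖ := by rw [← Submodule.coe_sub, ncoe]
        _ = ‖Rl (Pn n y - wn n)‖ := by rw [hsub]
        _ ≤ ‖Rl‖ * ‖Pn n y - wn n‖ := Rl.le_opNorm _
        _ ≤ M * ‖Pn n y - wn n‖ := mul_le_mul_of_nonneg_right hRlM (norm_nonneg _)
        _ = M * ‖((Pn n y : E₀)) - ((wn n : E₀))‖ := by rw [← Submodule.coe_sub, ncoe]
    have hg : Tendsto (fun n => M * ‖((Pn n y : E₀)) - ((wn n : E₀))‖) atTop (𝓝 0) := by
      have h1 : Tendsto (fun n => ((Pn n y : E₀)) - ((wn n : E₀))) atTop (𝓝 0) := by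
        have := (hPs y).sub hwn'
        rwa [sub_self] at this
      have := (h1.norm).const_mul M
      rwa [norm_zero, mul_zero] at this
    have hzero : Tendsto (fun n => ((Rn n (Pn n y) : E₀)) - ((xn n : E₀))) atTop (𝓝 0) :=
      squeeze_zero_norm' key hg
    have := hzero.add hxn
    simp only [sub_add_cancel, zero_add] at this
    exact this
end
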